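/- The density h₂ = −2u_xx·v_x + v·u_x² − 6u·u_x·v_x + 3v²·u_x + 8u²·v·u_x − (4/3)v_x² + u⁴·v + 2u²·v² + (7/9)v³ is a conserved density for the system u_t = F₁ = u_xxx + 3u·u_xx + 3u_x² + 3u²·u_x + v_xx + u_x·v + u·v_x, v_t = F₂ = v_xxx − 3u·v_xx + 3v·u_xx + 6u·u_x·v + 3u²·v_x + 4v·v_x, i.e. D_t h₂ is a total x-derivative. -/
import Mathlib


open MvPolynomial

/-- The differential polynomial ring ℝ[u, u_x, u_xx, …, v, v_x, …]:
variable `X (0, n)` is `u_{nx}`, `X (1, n)` is `v_{nx}`. -/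
abbrev DPoly : Type := MvPolynomial (Fin 2 × ℕ) ℝ

/-- The total derivative operator D_x, acting by D_x(u_{nx}) = u_{(n+1)x}. -/
noncomputable def Dx : Derivation ℝ DPoly DPoly :=
  MvPolynomial.mkDerivation ℝ (fun p => X (p.1, p.2 + 1))

/-- `U n` is `u_{nx}`. -/
noncomputable def U (n : ℕ) : DPoly := X ((0 : Fin 2), n)
/-- `V n` is `v_{nx}`. -/
noncomputable def V (n : ℕ) : DPoly := X ((1 : Fin 2), n)

/-- `Dxn n` is the n-th power of the total derivative. -/
noncomputable def Dxn (n : ℕ) : DPoly →ₗ[ℝ] DPoly := Dx.toLinearMap ^ n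

/-- The evolutionary (time) derivative attached to the flow (u_t, v_t) = (F₁, F₂):
D_t h = Σₙ (∂h/∂u_{nx})·D_x^n(F₁) + Σₙ (∂h/∂v_{nx})·D_x^n(F₂). -/
noncomputable def Dt (F₁ F₂ : DPoly) : Derivation ℝ DPoly DPoly :=
  MvPolynomial.mkDerivation ℝ (fun p => Dxn p.2 (if p.1 = 0 then F₁ else F₂))

/-- Euler (variational) derivative: E_i(h) = Σₙ (−D_x)^n (∂h/∂X(i,n)). -/
noncomputable def Eul (i : Fin 2) (h : DPoly) : DPoly :=
  ∑ᶠ n : ℕ, ((-1 : ℝ) ^ n) • Dxn n (pderiv (i, n) h)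

/-- The substitution homomorphism `v = 0`: sends every `v_{nx}` to 0 and fixes `u_{nx}`. -/
noncomputable def subV0 : DPoly →ₐ[ℝ] DPoly :=
  aeval (fun p : Fin 2 × ℕ => if p.1 = 0 then X p else 0)

noncomputable def P9 : DPoly := (-108)*(U 0*U 1*U 2*V 0) + (-432)*(U 0*U 1*V 0*V 1) + (-54)*(U 0*U 1*V 3) + (-333)*(U 0*U 1^2*V 1) + (117)*(U 0*U 2*V 0^2) + (108)*(U 0*U 2*V 2) + (-108)*(U 0*U 3*V 1) + (369)*(U 0^2*U 1*V 0^2) + (234)*(U 0^2*U 1*V 2) + (135)*(U 0^2*U 1^2*V 0) + (-288)*(U 0^2*U 2*V 1) + (72)*(U 0^2*U 3*V 0) + (108)*(U 0^2*V 0*V 2) + (81)*(U 0^2*V 0^3) + (-117)*(U 0^2*V 1^2) + (-414)*(U 0^3*U 1*V 1) + (252)*(U 0^3*U 2*V 0) + (351)*(U 0^4*U 1*V 0) + (90)*(U 0^4*V 0^2) + (9)*(U 0^4*V 2) + (-27)*(U 0^5*V 1) + (27)*(U 0^6*V 0) + (-180)*(U 1*U 2*V 1) + (18)*(U 1*U 3*V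 0) + (72)*(U 1*V 0*V 2) + (90)*(U 1*V 0^3) + (-54)*(U 1*V 1^2) + (153)*(U 1^2*V 0^2) + (63)*(U 1^2*V 2) + (63)*(U 1^3*V 0) + (-144)*(U 2*V 0*V 1) + (-18)*(U 2*V 3) + (-36)*(U 2^2*V 0) + (27)*(U 3*V 0^2) + (18)*(U 3*V 2) + (-18)*(U 4*V 1) + (-96)*(V 0*V 1^2) + (48)*(V 0^2*V 2) + (21)*(V 0^4) + (-42)*(V 1*V 3) + (21)*(V 2^2)

noncomputable def H9 : DPoly := -(18*(U 2*V 1)) + 9*(V 0*U 1^2) - 54*(U 0*U 1*V 1) + 27*(V 0^2*U 1)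
  + 72*(U 0^2*V 0*U 1) - 12*(V 1^2) + 9*(U 0^4*V 0) + 18*(U 0^2*V 0^2) + 7*(V 0^3)

lemma Dx_U (n : ℕ) : Dx (U n) = U (n+1) := by
  simp [Dx, U, mkDerivation_X]

lemma Dx_V (n : ℕ) : Dx (V n) = V (n+1) := by
  simp [Dx, V, mkDerivation_X]

lemma Dxn0 (p : DPoly) : Dxn 0 p = p := rfl

lemma Dxn1 (p : DPoly) : Dxn 1 p = Dx p := by
  show (Dx.toLinearMap ^ 1) p = _
  rw [pow_one]; rfl

lemma Dxn2 (p : DPoly) : Dxn 2 p = Dx (Dx p) := by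
  show (Dx.toLinearMap ^ 2) p = _
  rw [pow_succ, pow_one, Module.End.mul_apply]; rfl

lemma Dxn3 (p : DPoly) : Dxn 3 p = Dx (Dx (Dx p)) := by
  show (Dx.toLinearMap ^ 3) p = _
  rw [pow_succ, pow_succ, pow_one, Module.End.mul_apply, Module.End.mul_apply]; rfl

lemma Dt_U (F₁ F₂ : DPoly) (n : ℕ) : Dt F₁ F₂ (U n) = Dxn n F₁ := by
  simp [Dt, U, mkDerivation_X]

lemma Dt_V (F₁ F₂ : DPoly) (n : ℕ) : Dt F₁ F₂ (V n) = Dxn n F₂ := by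
  simp [Dt, V, mkDerivation_X]

lemma D_ofNat (D : Derivation ℝ DPoly DPoly) (n : ℕ) [n.AtLeastTwo] :
    D (OfNat.ofNat n : DPoly) = 0 := by
  exact D.map_natCast n

lemma ofNat_eq_C (n : ℕ) [n.AtLeastTwo] : (OfNat.ofNat n : DPoly) = C (OfNat.ofNat n : ℝ) :=
  (map_ofNat C n).symm

lemma C_smul_mul (a b : ℝ) (p : DPoly) : a • (C b * p) = C (a*b) * p := by
  rw [smul_eq_C_mul, ← mul_assoc, ← map_mul]

set_option maxHeartbeats 4000000 in
lemma key : Dx P9 = Dt (U 3 + 3*U 0*U 2 + 3*U 1^2 + 3*U 0^2*U 1 + V 2 + U 1*V 0 + U 0*V 1) (V 3 - 3*U 0*V 2 + 3*V 0*U 2 + 6*U 0*U 1*V 0 + 3*U 0^2*V 1 + 4*V 0*V 1) H9 := by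
  simp only [P9, H9, Derivation.map_add, Derivation.map_sub, Derivation.map_neg,
    Derivation.leibniz, Derivation.leibniz_pow, ← Nat.cast_ofNat (R := DPoly),
    Derivation.map_natCast, Dt_U, Dt_V,
    Dxn0, Dxn1, Dxn2, Dxn3, Dx_U, Dx_V, smul_eq_mul, nsmul_eq_mul,
    mul_zero, zero_mul, add_zero, zero_add, smul_zero]
  ring
/-- h₂ is a conserved density for the new system: D_t h₂ ∈ Im D_x. -/
theorem stmt6 :
    ∃ P : DPoly,
      Dx P = Dt (U 3 + 3*U 0*U 2 + 3*U 1^2 + 3*U 0^2*U 1 + V 2 + U 1*V 0 + U 0*V 1) (V 3 - 3*U 0*V 2 + 3*V 0*U 2 + 6*U 0*U 1*V 0 + 3*U 0^2*V 1 + 4*V 0*V 1) (-(2:ℝ) • (U 2*V 1) + V 0*U 1^2 - (6:ℝ) • (U 0*U 1*V 1) + 3*V 0^2*U 1 + 8*U 0^2*V 0*U 1 - (4/3 : ℝ) • (V 1^2) + U 0^4*V 0 + 2*U 0^2*V 0^2 + (7/9 : ℝ) • (V 0^3)) := by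
  refine ⟨(1/9:ℝ) • P9, ?_⟩
  have h2eq : (-(2:ℝ) • (U 2*V 1) + V 0*U 1^2 - (6:ℝ) • (U 0*U 1*V 1) + 3*V 0^2*U 1 + 8*U 0^2*V 0*U 1 - (4/3 : ℝ) • (V 1^2) + U 0^4*V 0 + 2*U 0^2*V 0^2 + (7/9 : ℝ) • (V 0^3) : DPoly) = (1/9:ℝ) • H9 := by
    simp only [H9, smul_add, smul_sub, smul_neg, ofNat_eq_C, C_smul_mul]
    norm_num
    simp only [smul_eq_C_mul]
    ring
  rw [h2eq, Derivation.map_smul, Derivation.map_smul, key]
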